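/- Let ω ∈ ℝ³ with ω ≠ 0, let 0 < r₁ < r₂, and let g : (r₁, r₂) → ℝ be differentiable with g'(r) ≠ 0 for all r ∈ (r₁, r₂). Define θ(x) = g(|x|) and c(x) = (1/2)|ω × x|² on the annulus A = {x ∈ ℝ³ : r₁ < |x| < r₂}. Then ∇c(x) = |ω|²·x − (ω·x)·ω for every x, and there exists x ∈ A such that ∇θ(x) × ∇c(x) ≠ 0. -/

import Mathlib

open Set Filter Topology

/-- The cross product on `ℝ³ = EuclideanSpace ℝ (Fin 3)`. -/
noncomputable def cross3 (a b : EuclideanSpace ℝ (Fin 3)) : EuclideanSpace ℝ (Fin 3) :=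
  (WithLp.equiv 2 (Fin 3 → ℝ)).symm
    ![a 1 * b 2 - a 2 * b 1, a 2 * b 0 - a 0 * b 2, a 0 * b 1 - a 1 * b 0]

open InnerProductSpace in
lemma cross3_lagrange (a b : EuclideanSpace ℝ (Fin 3)) :
    ‖cross3 a b‖ ^ 2 = ‖a‖ ^ 2 * ‖b‖ ^ 2 - (inner ℝ a b : ℝ) ^ 2 := by
  rw [← real_inner_self_eq_norm_sq, ← real_inner_self_eq_norm_sq,
    ← real_inner_self_eq_norm_sq]
  simp [cross3, PiLp.inner_apply, Fin.sum_univ_three, WithLp.equiv_symm_apply, PiLp.toLp_apply,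
    RCLike.inner_apply, conj_trivial, EuclideanSpace.norm_sq_eq, Real.norm_eq_abs, sq_abs]
  ring

lemma cross3_smul_left (c : ℝ) (a b : EuclideanSpace ℝ (Fin 3)) :
    cross3 (c • a) b = c • cross3 a b := by
  ext i
  fin_cases i <;>
    (simp [cross3, WithLp.equiv_symm_apply, PiLp.toLp_apply, PiLp.smul_apply, smul_eq_mul]; ring)

lemma cross3_smul_sub (c d e : ℝ) (x w : EuclideanSpace ℝ (Fin 3)) :
    cross3 (c • x) (d • x - e • w) = (-(c * e)) • cross3 x w := by
  ext i
  fin_cases i <;>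
    (simp [cross3, WithLp.equiv_symm_apply, PiLp.toLp_apply, PiLp.smul_apply, PiLp.sub_apply,
      smul_eq_mul]; ring)

lemma cross3_add_smul_left (s : ℝ) (e w : EuclideanSpace ℝ (Fin 3)) :
    cross3 (w + s • e) w = s • cross3 e w := by
  ext i
  fin_cases i <;>
    (simp [cross3, WithLp.equiv_symm_apply, PiLp.toLp_apply, PiLp.smul_apply, PiLp.add_apply,
      smul_eq_mul]; ring)

lemma ne_zero_of_apply_ne_zero (v : EuclideanSpace ℝ (Fin 3)) (i : Fin 3)
    (h : v i ≠ 0) : v ≠ 0 := fun h0 => h (by rw [h0]; rfl)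

open InnerProductSpace in
lemma hasGradientAt_centrifugal (ω x : EuclideanSpace ℝ (Fin 3)) :
    HasGradientAt (fun y : EuclideanSpace ℝ (Fin 3) => (1 / 2) * ‖cross3 ω y‖ ^ 2)
      (‖ω‖ ^ 2 • x - (inner ℝ ω x : ℝ) • ω) x := by
  have hfun : (fun y : EuclideanSpace ℝ (Fin 3) => (1 / 2) * ‖cross3 ω y‖ ^ 2) =
      fun y : EuclideanSpace ℝ (Fin 3) =>
        (‖ω‖ ^ 2 / 2) * ‖y‖ ^ 2 - (1 / 2) * ((inner ℝ ω y : ℝ) * (inner ℝ ω y : ℝ)) := by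
    funext y
    rw [cross3_lagrange]
    ring
  rw [hfun]
  have h1 : HasFDerivAt (fun y : EuclideanSpace ℝ (Fin 3) => ‖y‖ ^ 2)
      (2 • innerSL ℝ x) x := by
    simpa using (hasFDerivAt_id x).norm_sq
  have h2 : HasFDerivAt (fun y : EuclideanSpace ℝ (Fin 3) => (inner ℝ ω y : ℝ))
      (innerSL ℝ ω) x := (innerSL ℝ ω).hasFDerivAt
  have h3 := (h1.const_mul (‖ω‖ ^ 2 / 2)).sub ((h2.mul h2).const_mul (1 / 2))
  rw [hasGradientAt_iff_hasFDerivAt]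
  refine h3.congr_fderiv ?_
  ext y
  simp [toDual_apply_apply, inner_sub_left, real_inner_smul_left, real_inner_comm x y]
  ring

open InnerProductSpace in
lemma hasGradientAt_radial (g : ℝ → ℝ) (x : EuclideanSpace ℝ (Fin 3)) (hx : x ≠ 0)
    (hg : DifferentiableAt ℝ g ‖x‖) :
    HasGradientAt (fun y : EuclideanSpace ℝ (Fin 3) => g ‖y‖)
      ((deriv g ‖x‖ * ‖x‖⁻¹) • x) x := by
  have hxn : ‖x‖ ≠ 0 := norm_ne_zero_iff.2 hx
  have h1 : HasFDerivAt (fun y : EuclideanSpace ℝ (Fin 3) => ‖y‖ ^ 2)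
      (2 • innerSL ℝ x) x := by
    simpa using (hasFDerivAt_id x).norm_sq
  have h2 := (Real.hasDerivAt_sqrt (pow_ne_zero 2 hxn)).comp_hasFDerivAt x h1
  simp only [Function.comp_def] at h2
  have hn : HasFDerivAt (fun y : EuclideanSpace ℝ (Fin 3) => ‖y‖)
      (‖x‖⁻¹ • innerSL ℝ x) x := by
    have hfun : (fun y : EuclideanSpace ℝ (Fin 3) => Real.sqrt (‖y‖ ^ 2)) =
        fun y : EuclideanSpace ℝ (Fin 3) => ‖y‖ := by
      funext y; exact Real.sqrt_sq (norm_nonneg y)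
    rw [hfun] at h2
    refine h2.congr_fderiv ?_
    ext y
    rw [Real.sqrt_sq (norm_nonneg x)]
    simp [ContinuousLinearMap.smul_apply]
    field_simp
  have hθ := (hg.hasDerivAt).comp_hasFDerivAt x hn
  rw [hasGradientAt_iff_hasFDerivAt]
  refine hθ.congr_fderiv ?_
  ext y
  simp [toDual_apply_apply, real_inner_smul_left]
  ring

/-- For `ω ≠ 0`, the centrifugal potential `c(x) = (1/2)|ω × x|²`
has gradient `∇c(x) = |ω|² x - (ω·x) ω`, and a radially symmetric temperature
`θ(x) = g(|x|)` with `g' ≠ 0` on `(r₁,r₂)` has a point `x` in the annulus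
`{r₁ < |x| < r₂}` where `∇θ(x) × ∇c(x) ≠ 0`. -/
theorem stmt13 (ω : EuclideanSpace ℝ (Fin 3)) (hω : ω ≠ 0)
    (r₁ r₂ : ℝ) (hr₁ : 0 < r₁) (hr₁₂ : r₁ < r₂)
    (g : ℝ → ℝ)
    (hg : ∀ r ∈ Set.Ioo r₁ r₂, DifferentiableAt ℝ g r)
    (hg' : ∀ r ∈ Set.Ioo r₁ r₂, deriv g r ≠ 0) :
    (∀ x : EuclideanSpace ℝ (Fin 3),
      gradient (fun y : EuclideanSpace ℝ (Fin 3) => (1 / 2) * ‖cross3 ω y‖ ^ 2) x =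
        ‖ω‖ ^ 2 • x - (@inner ℝ _ _ ω x) • ω) ∧
    ∃ x : EuclideanSpace ℝ (Fin 3), (r₁ < ‖x‖ ∧ ‖x‖ < r₂) ∧
      cross3 (gradient (fun y : EuclideanSpace ℝ (Fin 3) => g ‖y‖) x)
        (gradient (fun y : EuclideanSpace ℝ (Fin 3) => (1 / 2) * ‖cross3 ω y‖ ^ 2) x) ≠ 0 := by
  constructor
  · exact fun x => (hasGradientAt_centrifugal ω x).gradient
  -- choose a direction `e` with `cross3 e ω ≠ 0`
  have hωn : ‖ω‖ ≠ 0 := norm_ne_zero_iff.2 hω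
  obtain ⟨e, he⟩ : ∃ e : EuclideanSpace ℝ (Fin 3), cross3 e ω ≠ 0 := by
    by_cases h0 : ω 0 = 0
    · by_cases h1 : ω 1 = 0
      · have h2 : ω 2 ≠ 0 := by
          intro h2
          exact hω (by ext i; fin_cases i <;> assumption)
        refine ⟨EuclideanSpace.single 0 1, ne_zero_of_apply_ne_zero _ 1 ?_⟩
        simp [cross3, WithLp.equiv_symm_apply, PiLp.toLp_apply, EuclideanSpace.single_apply]
        exact h2
      · refine ⟨EuclideanSpace.single 2 1, ne_zero_of_apply_ne_zero _ 0 ?_⟩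
        simp [cross3, WithLp.equiv_symm_apply, PiLp.toLp_apply, EuclideanSpace.single_apply]
        exact h1
    · refine ⟨EuclideanSpace.single 2 1, ne_zero_of_apply_ne_zero _ 1 ?_⟩
      simp [cross3, WithLp.equiv_symm_apply, PiLp.toLp_apply, EuclideanSpace.single_apply]
      exact h0
  -- choose a sign `s` so that `⟪ω, ω + s • e⟫ ≠ 0`
  obtain ⟨s, hs0, hip⟩ : ∃ s : ℝ, s ≠ 0 ∧ ‖ω‖ ^ 2 + s * (inner ℝ ω e : ℝ) ≠ 0 := by
    by_cases h : ‖ω‖ ^ 2 + (inner ℝ ω e : ℝ) = 0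
    · refine ⟨-1, by norm_num, fun h' => ?_⟩
      have hpos : 0 < ‖ω‖ ^ 2 := pow_pos (norm_pos_iff.2 hω) 2
      nlinarith
    · exact ⟨1, one_ne_zero, by simpa using h⟩
  set p : EuclideanSpace ℝ (Fin 3) := ω + s • e with hp
  have hpω : (inner ℝ ω p : ℝ) = ‖ω‖ ^ 2 + s * (inner ℝ ω e : ℝ) := by
    rw [hp, inner_add_right, real_inner_smul_right, real_inner_self_eq_norm_sq]
  have hip' : (inner ℝ ω p : ℝ) ≠ 0 := by rw [hpω]; exact hip
  have hp0 : p ≠ 0 := by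
    intro h
    rw [h] at hip'
    simp at hip'
  have hpc : cross3 p ω = s • cross3 e ω := cross3_add_smul_left s e ω
  have hpn : (0 : ℝ) < ‖p‖ := norm_pos_iff.2 hp0
  set r : ℝ := (r₁ + r₂) / 2 with hrdef
  have hr0 : 0 < r := by rw [hrdef]; linarith
  have hrIoo : r ∈ Set.Ioo r₁ r₂ := ⟨by rw [hrdef]; linarith, by rw [hrdef]; linarith⟩
  set t : ℝ := r / ‖p‖ with ht
  have ht0 : 0 < t := div_pos hr0 hpn
  set x : EuclideanSpace ℝ (Fin 3) := t • p with hx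
  have hxn : ‖x‖ = r := by
    rw [hx, norm_smul, Real.norm_eq_abs, abs_of_pos ht0, ht,
      div_mul_cancel₀ _ (ne_of_gt hpn)]
  have hx0 : x ≠ 0 := by
    intro h
    rw [h, norm_zero] at hxn
    exact absurd hxn.symm (ne_of_gt hr0)
  have hiωx : (inner ℝ ω x : ℝ) = t * (inner ℝ ω p : ℝ) := real_inner_smul_right ω p t
  have hiωx0 : (inner ℝ ω x : ℝ) ≠ 0 := by
    rw [hiωx]
    exact mul_ne_zero (ne_of_gt ht0) hip'
  have hcx : cross3 x ω ≠ 0 := by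
    rw [hx, cross3_smul_left, hpc]
    exact smul_ne_zero (ne_of_gt ht0) (smul_ne_zero hs0 he)
  refine ⟨x, ⟨hxn ▸ hrIoo.1, hxn ▸ hrIoo.2⟩, ?_⟩
  have hgθ : HasGradientAt (fun y : EuclideanSpace ℝ (Fin 3) => g ‖y‖)
      ((deriv g ‖x‖ * ‖x‖⁻¹) • x) x :=
    hasGradientAt_radial g x hx0 (by rw [hxn]; exact hg r hrIoo)
  rw [hgθ.gradient, (hasGradientAt_centrifugal ω x).gradient, cross3_smul_sub]
  refine smul_ne_zero ?_ hcx
  have hd : deriv g ‖x‖ ≠ 0 := by rw [hxn]; exact hg' r hrIoo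
  have hxnn : ‖x‖ ≠ 0 := norm_ne_zero_iff.2 hx0
  exact neg_ne_zero.2 (mul_ne_zero (mul_ne_zero hd (inv_ne_zero hxnn)) hiωx0)
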